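/- Let N ≥ 1, let a₀,…,a_N ∈ ℝ³ be distinct, λ₀,…,λ_N > 0, and μ > 0. Suppose x* ∈ ℝ³ ∖ {a₀,…,a_N} satisfies ζ(x*) = Σᵢ₌₀ᴺ λᵢ² (x* − aᵢ)/‖x* − aᵢ‖² = 0. Then S := Σᵢ₌₀ᴺ Σⱼ₌₀ᴺ λᵢ² λⱼ² ⟨aⱼ − aᵢ, aⱼ − x*⟩ / ((‖aᵢ − x*‖² + μ²)(‖aⱼ − x*‖² + μ²)‖aⱼ − x*‖²) > 0, where ⟨·,·⟩ denotes the Euclidean inner product on ℝ³. -/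

import Mathlib

open scoped RealInnerProductSpace

/-- (Lemma on the sign of `S`.) Let `N ≥ 1`, let `a₀, …, a_N ∈ ℝ³` be
distinct, `λᵢ > 0` and `μ > 0`. If `x⁎` away from the poles satisfies
`ζ(x⁎) = Σᵢ λᵢ² (x⁎ − aᵢ)/‖x⁎ − aᵢ‖² = 0`, then
`S = Σᵢⱼ λᵢ²λⱼ² ⟨aⱼ − aᵢ, aⱼ − x⁎⟩ / ((‖aᵢ − x⁎‖² + μ²)(‖aⱼ − x⁎‖² + μ²)‖aⱼ − x⁎‖²) > 0`. -/
theorem jnr_S_pos (N : ℕ) (hN : 1 ≤ N)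
    (a : Fin (N + 1) → EuclideanSpace ℝ (Fin 3)) (ha : Function.Injective a)
    (lam : Fin (N + 1) → ℝ) (hlam : ∀ i, 0 < lam i)
    (μ : ℝ) (hμ : 0 < μ)
    (xs : EuclideanSpace ℝ (Fin 3)) (hxs : ∀ i, xs ≠ a i)
    (hzero : ∑ i, ((lam i) ^ 2 / ‖xs - a i‖ ^ 2) • (xs - a i) = 0) :
    0 < ∑ i, ∑ j,
        (lam i) ^ 2 * (lam j) ^ 2 * (⟪a j - a i, a j - xs⟫) /
          ((‖a i - xs‖ ^ 2 + μ ^ 2) * (‖a j - xs‖ ^ 2 + μ ^ 2) * ‖a j - xs‖ ^ 2) := by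
  classical
  set d : Fin (N + 1) → EuclideanSpace ℝ (Fin 3) := fun i => a i - xs with hd
  have hdne : ∀ i, d i ≠ 0 := fun i => sub_ne_zero.mpr (fun h => hxs i h.symm)
  set r : Fin (N + 1) → ℝ := fun i => ‖d i‖ ^ 2 with hrdef
  have hr : ∀ i, 0 < r i := fun i => pow_pos (norm_pos_iff.mpr (hdne i)) 2
  have hrμ : ∀ i, 0 < r i + μ ^ 2 := fun i => by
    have := hr i; positivity
  set p : Fin (N + 1) → ℝ := fun i => lam i ^ 2 / (r i + μ ^ 2) with hpdef
  set q : Fin (N + 1) → ℝ := fun i => lam i ^ 2 / ((r i + μ ^ 2) * r i) with hqdef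
  have hp : ∀ i, 0 < p i := fun i => div_pos (pow_pos (hlam i) 2) (hrμ i)
  have hq : ∀ i, 0 < q i := fun i => div_pos (pow_pos (hlam i) 2) (mul_pos (hrμ i) (hr i))
  set u : EuclideanSpace ℝ (Fin 3) := ∑ i, p i • d i with hu
  set v : EuclideanSpace ℝ (Fin 3) := ∑ i, q i • d i with hv
  -- From the critical point equation: u + μ² • v = 0
  have h1 : ∑ i, ((lam i) ^ 2 / r i) • d i = 0 := by
    have : ∑ i, ((lam i) ^ 2 / r i) • d i
        = - ∑ i, ((lam i) ^ 2 / ‖xs - a i‖ ^ 2) • (xs - a i) := by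
      rw [← Finset.sum_neg_distrib]
      refine Finset.sum_congr rfl fun i _ => ?_
      rw [norm_sub_rev, show xs - a i = -(d i) from (neg_sub (a i) xs).symm, smul_neg, neg_neg]
    rw [this, hzero, neg_zero]
  have hzero' : u + (μ ^ 2) • v = 0 := by
    rw [hu, hv, Finset.smul_sum, ← Finset.sum_add_distrib, ← h1]
    refine Finset.sum_congr rfl fun i _ => ?_
    rw [smul_smul, ← add_smul]
    congr 1
    have h2 : ‖d i‖ ^ 2 ≠ 0 := (hr i).ne'
    have h3 : ‖d i‖ ^ 2 + μ ^ 2 ≠ 0 := (hrμ i).ne'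
    show lam i ^ 2 / (‖d i‖ ^ 2 + μ ^ 2) + μ ^ 2 * (lam i ^ 2 / ((‖d i‖ ^ 2 + μ ^ 2) * ‖d i‖ ^ 2))
        = lam i ^ 2 / ‖d i‖ ^ 2
    field_simp
    have h2' : ‖d i‖ ≠ 0 := norm_ne_zero_iff.mpr (hdne i)
    have h2'' : ‖d i‖ ^ 2 * ‖d i‖⁻¹ ^ 2 = 1 := by rw [← mul_pow, mul_inv_cancel₀ h2', one_pow]
    linear_combination (-lam i ^ 2) * h2''
  have huv : ⟪u, v⟫ = -(μ ^ 2 * ‖v‖ ^ 2) := by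
    have : u = -((μ ^ 2) • v) := eq_neg_of_add_eq_zero_left hzero'
    rw [this, inner_neg_left, real_inner_smul_left, real_inner_self_eq_norm_sq]
  -- rewrite the double sum
  have key : (∑ i, ∑ j,
        (lam i) ^ 2 * (lam j) ^ 2 * (⟪a j - a i, a j - xs⟫) /
          ((‖a i - xs‖ ^ 2 + μ ^ 2) * (‖a j - xs‖ ^ 2 + μ ^ 2) * ‖a j - xs‖ ^ 2))
      = (∑ i, p i) * (∑ j, q j * r j) - ⟪u, v⟫ := by
    have hip : ⟪u, v⟫ = ∑ i, ∑ j, p i * (q j * ⟪d i, d j⟫) := by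
      rw [hu, hv, sum_inner]
      refine Finset.sum_congr rfl fun i _ => ?_
      rw [inner_sum]
      refine Finset.sum_congr rfl fun j _ => ?_
      rw [real_inner_smul_left, real_inner_smul_right]
    rw [hip, Finset.sum_mul_sum, ← Finset.sum_sub_distrib]
    refine Finset.sum_congr rfl fun i _ => ?_
    rw [← Finset.sum_sub_distrib]
    refine Finset.sum_congr rfl fun j _ => ?_
    have hij : a j - a i = d j - d i := (sub_sub_sub_cancel_right (a j) (a i) xs).symm
    have hinner : ⟪a j - a i, a j - xs⟫ = ‖d j‖ ^ 2 - ⟪d i, d j⟫ := by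
      rw [show a j - xs = d j from rfl, hij, inner_sub_left, real_inner_self_eq_norm_sq]
    rw [hinner, show ‖a i - xs‖ = ‖d i‖ from rfl, show ‖a j - xs‖ = ‖d j‖ from rfl,
      hpdef, hqdef]
    show lam i ^ 2 * lam j ^ 2 * (‖d j‖ ^ 2 - ⟪d i, d j⟫) /
          ((‖d i‖ ^ 2 + μ ^ 2) * (‖d j‖ ^ 2 + μ ^ 2) * ‖d j‖ ^ 2)
        = lam i ^ 2 / (‖d i‖ ^ 2 + μ ^ 2) * (lam j ^ 2 / ((‖d j‖ ^ 2 + μ ^ 2) * ‖d j‖ ^ 2) * ‖d j‖ ^ 2)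
          - lam i ^ 2 / (‖d i‖ ^ 2 + μ ^ 2) * (lam j ^ 2 / ((‖d j‖ ^ 2 + μ ^ 2) * ‖d j‖ ^ 2) * ⟪d i, d j⟫)
    have h2 : ‖d i‖ ^ 2 ≠ 0 := (hr i).ne'
    have h3 : ‖d j‖ ^ 2 ≠ 0 := (hr j).ne'
    have h4 : ‖d i‖ ^ 2 + μ ^ 2 ≠ 0 := (hrμ i).ne'
    have h5 : ‖d j‖ ^ 2 + μ ^ 2 ≠ 0 := (hrμ j).ne'
    field_simp
  rw [key, huv, sub_neg_eq_add]
  have hP : 0 < ∑ i, p i :=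
    Finset.sum_pos (fun i _ => hp i) Finset.univ_nonempty
  have hQ : 0 < ∑ j, q j * r j :=
    Finset.sum_pos (fun j _ => mul_pos (hq j) (hr j)) Finset.univ_nonempty
  have : 0 ≤ μ ^ 2 * ‖v‖ ^ 2 := by positivity
  nlinarith [mul_pos hP hQ]
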